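/- Under the same hypotheses as the previous lemma (isometry V : ℂ^d → ℂ^D with d ≥ 2, encoded basis |i⟩ = V ẽ_i, channel ℰ with Kraus family (E_a), recovery channel R with ‖R(ℰ(ρ)) − ρ‖₁ ≤ ε̃ for all density operators ρ supported on the range of V, and P_i the orthogonal projection onto the positive eigenspace of M_i = ℰ(|i⟩⟨i| − ρ_{i,⊥}) with ρ_{i,⊥} = (d−1)^{−1} Σ_{j≠i}|j⟩⟨j|): for every j ≠ i and every Kraus operator E_a, ‖P_i E_a |j⟩‖² ≤ d·ε̃. -/

import Mathlib

open Matrix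
open scoped ComplexOrder

/-- The trace norm `‖A‖₁ = Tr √(AᴴA)` of a complex square matrix. -/
noncomputable def traceNorm {n : Type*} [Fintype n] [DecidableEq n] (A : Matrix n n ℂ) : ℝ :=
  ((((Matrix.posSemidef_conjTranspose_mul_self A).1.eigenvectorUnitary : Matrix n n ℂ) *
      Matrix.diagonal (fun i => ((Real.sqrt ((Matrix.posSemidef_conjTranspose_mul_self A).1.eigenvalues i) : ℝ) : ℂ)) *
      (star (Matrix.posSemidef_conjTranspose_mul_self A).1.eigenvectorUnitary : Matrix n n ℂ))).trace.re

/-- A density operator: positive semidefinite with unit trace. -/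
def IsDensity {n : Type*} [Fintype n] (ρ : Matrix n n ℂ) : Prop :=
  ρ.PosSemidef ∧ ρ.trace = 1

/-- Apply the channel with Kraus family `K`: `ρ ↦ Σ_a K_a ρ K_aᴴ`. -/
noncomputable def applyKraus {ι n n' : Type*} [Fintype ι] [Fintype n] [Fintype n']
    (K : ι → Matrix n' n ℂ) (ρ : Matrix n n ℂ) : Matrix n' n' ℂ :=
  ∑ a, K a * ρ * (K a)ᴴ

/-- The Euclidean norm of a complex vector. -/
noncomputable def evecNorm {n : Type*} [Fintype n] (v : n → ℂ) : ℝ :=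
  Real.sqrt (∑ i, Complex.normSq (v i))

/-- The orthogonal projection onto the direct sum of the eigenspaces of a Hermitian
matrix `M` with positive eigenvalue. -/
noncomputable def posProj {n : Type*} [Fintype n] [DecidableEq n] {M : Matrix n n ℂ}
    (hM : M.IsHermitian) : Matrix n n ℂ :=
  (hM.eigenvectorUnitary : Matrix n n ℂ) *
    Matrix.diagonal (fun i => if 0 < hM.eigenvalues i then (1 : ℂ) else 0) *
    (hM.eigenvectorUnitary : Matrix n n ℂ)ᴴ

/-- The encoded basis vector `|i⟩ = V ẽ_i`. -/
noncomputable def ket {d D : ℕ} (V : Matrix (Fin D) (Fin d) ℂ) (i : Fin d) : Fin D → ℂ :=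
  V *ᵥ Pi.single i 1

/-- The rank-one projector `|i⟩⟨i|` onto the encoded basis vector. -/
noncomputable def ketbra {d D : ℕ} (V : Matrix (Fin D) (Fin d) ℂ) (i : Fin d) :
    Matrix (Fin D) (Fin D) ℂ :=
  Matrix.vecMulVec (ket V i) (star (ket V i))

/-- The state `ρ_{i,⊥} = (d−1)⁻¹ Σ_{j ≠ i} |j⟩⟨j|`. -/
noncomputable def rhoPerp {d D : ℕ} (V : Matrix (Fin D) (Fin d) ℂ) (i : Fin d) :
    Matrix (Fin D) (Fin D) ℂ :=
  ((d : ℂ) - 1)⁻¹ • ∑ j ∈ Finset.univ.erase i, ketbra V j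

set_option linter.unusedSectionVars false
set_option maxHeartbeats 1000000

section GhostHelpers
variable {n : Type*} [Fintype n] [DecidableEq n]

lemma gpDiagNonneg {A : Matrix n n ℂ} (hA : A.PosSemidef) (k : n) : 0 ≤ A k k := by
  have h := hA.dotProduct_mulVec_nonneg (Pi.single k 1)
  simpa [dotProduct, mulVec, Pi.single_apply] using h

lemma gpTraceMulDiagonal (A : Matrix n n ℂ) (v : n → ℂ) :
    (A * diagonal v).trace = ∑ k, A k k * v k := by
  simp [Matrix.trace, Matrix.diag, mul_diagonal]

lemma gpMulVecMulVec (A : Matrix n n ℂ) (v w : n → ℂ) :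
    A * vecMulVec v w = vecMulVec (A *ᵥ v) w := by
  ext i j
  simp [mul_apply, vecMulVec_apply, mulVec, dotProduct, Finset.sum_mul, mul_assoc]

lemma gpVecMulVecMulVec (v w x : n → ℂ) : (vecMulVec v w) *ᵥ x = (w ⬝ᵥ x) • v := by
  ext i
  simp [vecMulVec_apply, mulVec, dotProduct, Finset.mul_sum, mul_comm, mul_left_comm]

lemma gpTraceVecMulVec (v w : n → ℂ) : (vecMulVec v w).trace = w ⬝ᵥ v := by
  simp [Matrix.trace, Matrix.diag, vecMulVec_apply, dotProduct, mul_comm]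

lemma gpTraceMulVecMulVec (A : Matrix n n ℂ) (v w : n → ℂ) :
    (A * vecMulVec v w).trace = w ⬝ᵥ (A *ᵥ v) := by
  rw [gpMulVecMulVec, gpTraceVecMulVec]

lemma gpVecMulVecHerm (v : n → ℂ) : (vecMulVec v (star v)).IsHermitian := by
  ext i j
  simp [conjTranspose_apply, vecMulVec_apply, mul_comm]

lemma gpVecMulVecSmul (c : ℂ) (v w : n → ℂ) :
    vecMulVec (c • v) w = c • vecMulVec v w := by
  ext i j
  simp [vecMulVec_apply, mul_assoc]

lemma gpVecMulVecPSD (v : n → ℂ) : (vecMulVec v (star v)).PosSemidef := by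
  refine PosSemidef.of_dotProduct_mulVec_nonneg (gpVecMulVecHerm v) fun x => ?_
  have h : star x ⬝ᵥ (vecMulVec v (star v)) *ᵥ x = star (star v ⬝ᵥ x) * (star v ⬝ᵥ x) := by
    rw [gpVecMulVecMulVec, dotProduct_smul, smul_eq_mul, mul_comm]
    congr 1
    simp [dotProduct, star_sum, mul_comm]
  rw [h]
  exact star_mul_self_nonneg _

lemma gpKrausVecMulVec (B : Matrix n n ℂ) (v : n → ℂ) :
    B * vecMulVec v (star v) * Bᴴ = vecMulVec (B *ᵥ v) (star (B *ᵥ v)) := by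
  rw [gpMulVecMulVec]
  ext i j
  simp [mul_apply, vecMulVec_apply, star_mulVec, vecMul, dotProduct, Finset.mul_sum,
    conjTranspose_apply, mul_comm, mul_left_comm]

lemma gpOneSubProjPSD {P : Matrix n n ℂ} (hP : Pᴴ = P) (hPP : P * P = P) :
    (1 - P).PosSemidef := by
  have h : (1 - P)ᴴ * (1 - P) = 1 - P := by
    rw [conjTranspose_sub, conjTranspose_one, hP, Matrix.sub_mul, Matrix.mul_sub,
      Matrix.mul_sub, hPP]
    simp
  rw [← h]
  exact posSemidef_conjTranspose_mul_self _

lemma gpPSDSmulReal {A : Matrix n n ℂ} (hA : A.PosSemidef) {c : ℝ} (hc : 0 ≤ c) :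
    (((c : ℂ)) • A).PosSemidef := by
  refine PosSemidef.of_dotProduct_mulVec_nonneg ?_ fun x => ?_
  · show (((c : ℂ)) • A)ᴴ = _
    rw [conjTranspose_smul, hA.1.eq]
    congr 1
    simp [Complex.star_def, Complex.conj_ofReal]
  · rw [Matrix.smul_mulVec, dotProduct_smul, smul_eq_mul]
    exact mul_nonneg (Complex.zero_le_real.mpr hc) (hA.dotProduct_mulVec_nonneg x)

variable {ι : Type*} [Fintype ι]

lemma gpPosSemidefSum {s : Finset ι} {f : ι → Matrix n n ℂ}
    (h : ∀ a ∈ s, (f a).PosSemidef) : (∑ a ∈ s, f a).PosSemidef := by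
  refine PosSemidef.of_dotProduct_mulVec_nonneg ?_ fun x => ?_
  · show (∑ a ∈ s, f a)ᴴ = _
    rw [conjTranspose_sum]
    exact Finset.sum_congr rfl fun a ha => (h a ha).1
  · have hs : (∑ a ∈ s, f a) *ᵥ x = ∑ a ∈ s, (f a *ᵥ x) := by
      ext i
      simp only [mulVec, dotProduct, Matrix.sum_apply, Finset.sum_apply, Finset.sum_mul]
      rw [Finset.sum_comm]
    have hd : star x ⬝ᵥ ∑ a ∈ s, f a *ᵥ x = ∑ a ∈ s, star x ⬝ᵥ (f a *ᵥ x) := by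
      simp only [dotProduct, Finset.sum_apply, Finset.mul_sum]
      rw [Finset.sum_comm]
    rw [hs, hd]
    exact Finset.sum_nonneg fun a ha => (h a ha).dotProduct_mulVec_nonneg x

lemma gpApplyKrausSub (K : ι → Matrix n n ℂ) (A B : Matrix n n ℂ) :
    applyKraus K (A - B) = applyKraus K A - applyKraus K B := by
  simp [applyKraus, sub_mul, mul_sub, Finset.sum_sub_distrib]

lemma gpApplyKrausAdd (K : ι → Matrix n n ℂ) (A B : Matrix n n ℂ) :
    applyKraus K (A + B) = applyKraus K A + applyKraus K B := by
  simp [applyKraus, add_mul, mul_add, Finset.sum_add_distrib]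

lemma gpApplyKrausSmul (K : ι → Matrix n n ℂ) (c : ℂ) (A : Matrix n n ℂ) :
    applyKraus K (c • A) = c • applyKraus K A := by
  simp [applyKraus, Finset.smul_sum, mul_smul_comm, smul_mul_assoc]

lemma gpApplyKrausSum (K : ι → Matrix n n ℂ) {κ : Type*} (s : Finset κ)
    (f : κ → Matrix n n ℂ) :
    applyKraus K (∑ j ∈ s, f j) = ∑ j ∈ s, applyKraus K (f j) := by
  simp [applyKraus, Finset.mul_sum, Finset.sum_mul]
  rw [Finset.sum_comm]

lemma gpApplyKrausTrace (K : ι → Matrix n n ℂ) (hK : ∑ a, (K a)ᴴ * K a = 1)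
    (ρ : Matrix n n ℂ) : (applyKraus K ρ).trace = ρ.trace := by
  rw [applyKraus, trace_sum]
  calc ∑ a, (K a * ρ * (K a)ᴴ).trace = ∑ a, ((K a)ᴴ * K a * ρ).trace := by
        refine Finset.sum_congr rfl fun a _ => ?_
        rw [Matrix.trace_mul_cycle]
    _ = ((∑ a, (K a)ᴴ * K a) * ρ).trace := by rw [Finset.sum_mul, trace_sum]
    _ = ρ.trace := by rw [hK, one_mul]

lemma gpApplyKrausPSD (K : ι → Matrix n n ℂ) {ρ : Matrix n n ℂ} (hρ : ρ.PosSemidef) :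
    (applyKraus K ρ).PosSemidef :=
  gpPosSemidefSum fun a _ => hρ.mul_mul_conjTranspose_same (K a)

lemma gpApplyKrausHerm (K : ι → Matrix n n ℂ) {ρ : Matrix n n ℂ} (hρ : ρ.IsHermitian) :
    (applyKraus K ρ).IsHermitian := by
  show (applyKraus K ρ)ᴴ = _
  rw [applyKraus, conjTranspose_sum]
  refine Finset.sum_congr rfl fun a _ => ?_
  simp [conjTranspose_mul, hρ.eq, mul_assoc]

lemma gpApplyKrausPair (K : ι → Matrix n n ℂ) (Q ρ : Matrix n n ℂ) :
    (Q * applyKraus K ρ).trace = (applyKraus (fun a => (K a)ᴴ) Q * ρ).trace := by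
  rw [applyKraus, applyKraus, Finset.mul_sum, Finset.sum_mul, trace_sum, trace_sum]
  refine Finset.sum_congr rfl fun a _ => ?_
  rw [conjTranspose_conjTranspose]
  calc (Q * (K a * ρ * (K a)ᴴ)).trace
      = (Q * (K a * ρ) * (K a)ᴴ).trace := by rw [← mul_assoc, ← mul_assoc]
    _ = ((K a)ᴴ * (Q * (K a * ρ))).trace := (Matrix.trace_mul_comm _ _)
    _ = ((K a)ᴴ * Q * (K a * ρ)).trace := by rw [mul_assoc]
    _ = ((K a)ᴴ * Q * K a * ρ).trace := by rw [mul_assoc ((K a)ᴴ * Q), ← mul_assoc]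

lemma gpApplyKrausConjOne (K : ι → Matrix n n ℂ) (hK : ∑ a, (K a)ᴴ * K a = 1) :
    applyKraus (fun a => (K a)ᴴ) 1 = 1 := by
  rw [applyKraus]
  simpa using hK

variable {X : Matrix n n ℂ} (hX : X.IsHermitian)

lemma gpUmulU : (hX.eigenvectorUnitary : Matrix n n ℂ)ᴴ *
    (hX.eigenvectorUnitary : Matrix n n ℂ) = 1 := by
  rw [← Matrix.star_eq_conjTranspose]
  exact Matrix.mem_unitaryGroup_iff'.mp hX.eigenvectorUnitary.2

lemma gpUmulU' : (hX.eigenvectorUnitary : Matrix n n ℂ) *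
    (hX.eigenvectorUnitary : Matrix n n ℂ)ᴴ = 1 := by
  rw [← Matrix.star_eq_conjTranspose]
  exact Matrix.mem_unitaryGroup_iff.mp hX.eigenvectorUnitary.2

lemma gpSpectral : X = (hX.eigenvectorUnitary : Matrix n n ℂ) *
    diagonal (fun k => (hX.eigenvalues k : ℂ)) * (hX.eigenvectorUnitary : Matrix n n ℂ)ᴴ := by
  rw [← Matrix.star_eq_conjTranspose]
  exact hX.spectral_theorem

lemma gpTraceFormula (Q : Matrix n n ℂ) :
    (Q * X).trace = ∑ k, (hX.eigenvalues k : ℂ) *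
      (((hX.eigenvectorUnitary : Matrix n n ℂ)ᴴ * Q *
        (hX.eigenvectorUnitary : Matrix n n ℂ)) k k) := by
  set U := (hX.eigenvectorUnitary : Matrix n n ℂ) with hU
  conv_lhs => rw [gpSpectral hX]
  rw [show Q * (U * diagonal (fun k => (hX.eigenvalues k : ℂ)) * Uᴴ)
      = (Q * U) * diagonal (fun k => (hX.eigenvalues k : ℂ)) * Uᴴ by
    rw [← mul_assoc, ← mul_assoc]]
  rw [Matrix.trace_mul_cycle, ← mul_assoc, gpTraceMulDiagonal]
  refine Finset.sum_congr rfl fun k _ => ?_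
  rw [mul_comm, mul_assoc]

lemma gpTraceEqSumEigen : X.trace = ∑ k, (hX.eigenvalues k : ℂ) := by
  have h := gpTraceFormula hX 1
  rw [one_mul] at h
  rw [h]
  refine Finset.sum_congr rfl fun k _ => ?_
  rw [Matrix.mul_one, gpUmulU hX, Matrix.one_apply_eq, mul_one]

lemma gpConjDiagLe {S U : Matrix n n ℂ} (hS : (1 - S).PosSemidef) (hU : Uᴴ * U = 1) (k : n) :
    ((Uᴴ * S * U) k k).re ≤ 1 := by
  have h := gpDiagNonneg (hS.conjTranspose_mul_mul_same U) k
  have he : Uᴴ * (1 - S) * U = 1 - Uᴴ * S * U := by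
    rw [Matrix.mul_sub, Matrix.sub_mul, Matrix.mul_one, hU]
  rw [he] at h
  have := (Complex.nonneg_iff.mp h).1
  simp only [Matrix.sub_apply, Matrix.one_apply_eq, Complex.sub_re, Complex.one_re] at this
  linarith

lemma gpTraceReLe {S : Matrix n n ℂ} (h1 : (1 - S).PosSemidef) (h2 : (1 + S).PosSemidef) :
    ((S * X).trace).re ≤ ∑ k, |hX.eigenvalues k| := by
  set U := (hX.eigenvectorUnitary : Matrix n n ℂ) with hUdef
  have hU : Uᴴ * U = 1 := gpUmulU hX
  rw [gpTraceFormula hX S, Complex.re_sum]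
  refine Finset.sum_le_sum fun k _ => ?_
  have hle : ((Uᴴ * S * U) k k).re ≤ 1 := gpConjDiagLe h1 hU k
  have hge : -1 ≤ ((Uᴴ * S * U) k k).re := by
    have h' : (1 - (-S)).PosSemidef := by rwa [sub_neg_eq_add]
    have := gpConjDiagLe h' hU k
    have he : Uᴴ * (-S) * U = -(Uᴴ * S * U) := by
      rw [Matrix.mul_neg, Matrix.neg_mul]
    rw [he] at this
    simp only [Matrix.neg_apply, Complex.neg_re] at this
    linarith
  rw [show ((hX.eigenvalues k : ℂ) * ((Uᴴ * S * U) k k)).re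
      = hX.eigenvalues k * ((Uᴴ * S * U) k k).re by
    rw [Complex.re_ofReal_mul]]
  calc hX.eigenvalues k * ((Uᴴ * S * U) k k).re
      ≤ |hX.eigenvalues k * ((Uᴴ * S * U) k k).re| := le_abs_self _
    _ = |hX.eigenvalues k| * |((Uᴴ * S * U) k k).re| := abs_mul _ _
    _ ≤ |hX.eigenvalues k| * 1 :=
        mul_le_mul_of_nonneg_left (abs_le.mpr ⟨hge, hle⟩) (abs_nonneg _)
    _ = |hX.eigenvalues k| := mul_one _

lemma gpTraceNormHerm : traceNorm X = ∑ k, |hX.eigenvalues k| := by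
  set U := (hX.eigenvectorUnitary : Matrix n n ℂ) with hUdef
  have hU : Uᴴ * U = 1 := gpUmulU hX
  have hU' : U * Uᴴ = 1 := gpUmulU' hX
  set B := U * diagonal (fun k => ((|hX.eigenvalues k| : ℝ) : ℂ)) * Uᴴ with hB
  have hBpsd : B.PosSemidef := by
    refine (Matrix.PosSemidef.diagonal ?_).mul_mul_conjTranspose_same U
    intro k
    exact Complex.zero_le_real.mpr (abs_nonneg _)
  have hB2 : B ^ 2 = Xᴴ * X := by
    rw [hX.eq]
    conv_rhs => rw [gpSpectral hX]
    rw [pow_two, hB]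
    rw [show U * diagonal (fun k => ((|hX.eigenvalues k| : ℝ) : ℂ)) * Uᴴ *
        (U * diagonal (fun k => ((|hX.eigenvalues k| : ℝ) : ℂ)) * Uᴴ)
        = U * (diagonal (fun k => ((|hX.eigenvalues k| : ℝ) : ℂ)) * ((Uᴴ * U) *
          diagonal (fun k => ((|hX.eigenvalues k| : ℝ) : ℂ)))) * Uᴴ by
      simp only [mul_assoc]]
    rw [show U * diagonal (fun k => (hX.eigenvalues k : ℂ)) * Uᴴ *
        (U * diagonal (fun k => (hX.eigenvalues k : ℂ)) * Uᴴ)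
        = U * (diagonal (fun k => (hX.eigenvalues k : ℂ)) * ((Uᴴ * U) *
          diagonal (fun k => (hX.eigenvalues k : ℂ)))) * Uᴴ by
      simp only [mul_assoc]]
    rw [hU, one_mul, one_mul, diagonal_mul_diagonal, diagonal_mul_diagonal]
    congr 1
    congr 1
    funext k
    simp [← Complex.ofReal_mul, abs_mul_abs_self]
  have hsqrt : B = (((Matrix.posSemidef_conjTranspose_mul_self X).1.eigenvectorUnitary :
      Matrix n n ℂ) * Matrix.diagonal (fun i => ((Real.sqrt
        ((Matrix.posSemidef_conjTranspose_mul_self X).1.eigenvalues i) : ℝ) : ℂ)) *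
      (star (Matrix.posSemidef_conjTranspose_mul_self X).1.eigenvectorUnitary : Matrix n n ℂ)) := by
    open scoped MatrixOrder in
    have hY := Matrix.posSemidef_conjTranspose_mul_self X
    have h1 : CFC.sqrt (Xᴴ * X) = B := CFC.sqrt_unique (by rw [← sq, hB2]) hBpsd.nonneg
    rw [← h1, CFC.sqrt_eq_real_sqrt _ hY.nonneg, cfcₙ_eq_cfc, hY.1.cfc_eq]
    rfl
  rw [traceNorm, ← hsqrt, hB]
  rw [Matrix.trace_mul_cycle, hU, one_mul, Matrix.trace_diagonal]
  rw [Complex.re_sum]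
  refine Finset.sum_congr rfl fun k _ => ?_
  exact Complex.ofReal_re _

lemma gpConjPosProj : (hX.eigenvectorUnitary : Matrix n n ℂ)ᴴ * posProj hX *
    (hX.eigenvectorUnitary : Matrix n n ℂ)
    = diagonal (fun k => if 0 < hX.eigenvalues k then (1 : ℂ) else 0) := by
  set U := (hX.eigenvectorUnitary : Matrix n n ℂ) with hUdef
  set Dm := diagonal (fun k => if 0 < hX.eigenvalues k then (1 : ℂ) else 0) with hD
  show Uᴴ * (U * Dm * Uᴴ) * U = Dm
  rw [show Uᴴ * (U * Dm * Uᴴ) * U = (Uᴴ * U) * Dm * (Uᴴ * U) by simp only [mul_assoc]]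
  rw [gpUmulU hX, one_mul, mul_one]

lemma gpPosProjHerm : (posProj hX)ᴴ = posProj hX := by
  rw [posProj]
  rw [conjTranspose_mul, conjTranspose_mul, conjTranspose_conjTranspose, diagonal_conjTranspose]
  rw [show star (fun k => if 0 < hX.eigenvalues k then (1 : ℂ) else 0)
      = (fun k => if 0 < hX.eigenvalues k then (1 : ℂ) else 0) by
    funext k; by_cases h : 0 < hX.eigenvalues k <;> simp [h, Pi.star_apply]]
  simp only [mul_assoc]

lemma gpPosProjIdem : posProj hX * posProj hX = posProj hX := by
  rw [posProj]
  set U := (hX.eigenvectorUnitary : Matrix n n ℂ) with hUdef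
  set v := (fun k => if 0 < hX.eigenvalues k then (1 : ℂ) else 0) with hv
  rw [show U * diagonal v * Uᴴ * (U * diagonal v * Uᴴ)
      = U * (diagonal v * ((Uᴴ * U) * diagonal v)) * Uᴴ by simp only [mul_assoc]]
  rw [gpUmulU hX, one_mul, diagonal_mul_diagonal]
  have hvv : (fun i => v i * v i) = v := by
    funext k; by_cases h : 0 < hX.eigenvalues k <;> simp [hv, h]
  rw [hvv]

lemma gpTracePosProjMul : ((posProj hX * X).trace).re
    = ∑ k, if 0 < hX.eigenvalues k then hX.eigenvalues k else 0 := by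
  rw [gpTraceFormula hX (posProj hX)]
  rw [show (hX.eigenvectorUnitary : Matrix n n ℂ)ᴴ * posProj hX *
      (hX.eigenvectorUnitary : Matrix n n ℂ)
      = diagonal (fun k => if 0 < hX.eigenvalues k then (1 : ℂ) else 0) from gpConjPosProj hX]
  rw [Complex.re_sum]
  refine Finset.sum_congr rfl fun k _ => ?_
  rw [diagonal_apply_eq]
  by_cases h : 0 < hX.eigenvalues k <;> simp [h]

lemma gpTracePosProjPSDLe {σ : Matrix n n ℂ} (hσ : σ.PosSemidef) :
    ((posProj hX * σ).trace).re ≤ σ.trace.re := by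
  set U := (hX.eigenvectorUnitary : Matrix n n ℂ) with hUdef
  set W := Uᴴ * σ * U with hW
  have hWpsd : W.PosSemidef := hσ.conjTranspose_mul_mul_same U
  have h1 : (posProj hX * σ).trace = ∑ k, (if 0 < hX.eigenvalues k then (1:ℂ) else 0) * W k k := by
    rw [posProj]
    rw [Matrix.trace_mul_cycle, Matrix.trace_mul_cycle, ← Matrix.mul_assoc]
    rw [← hUdef, gpTraceMulDiagonal]
    exact Finset.sum_congr rfl fun k _ => mul_comm _ _
  have h2 : σ.trace = ∑ k, W k k := by
    have : W.trace = σ.trace := by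
      rw [hW, Matrix.trace_mul_comm, ← Matrix.mul_assoc, gpUmulU' hX, one_mul]
    rw [← this]; rfl
  rw [h1, h2, Complex.re_sum, Complex.re_sum]
  refine Finset.sum_le_sum fun k _ => ?_
  have hk := (Complex.nonneg_iff.mp (gpDiagNonneg hWpsd k)).1
  by_cases h : 0 < hX.eigenvalues k <;> simp [h, hk]

lemma gpProjNormSq {P : Matrix n n ℂ} (hP : Pᴴ = P) (hPP : P * P = P) (w : n → ℂ) :
    ∑ i, Complex.normSq ((P *ᵥ w) i) = (star w ⬝ᵥ (P *ᵥ w)).re := by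
  have h1 : star (P *ᵥ w) ⬝ᵥ (P *ᵥ w) = ∑ i, (Complex.normSq ((P *ᵥ w) i) : ℂ) := by
    simp only [dotProduct, Pi.star_apply]
    exact Finset.sum_congr rfl fun i _ => (Complex.normSq_eq_conj_mul_self).symm
  have h2 : star (P *ᵥ w) ⬝ᵥ (P *ᵥ w) = star w ⬝ᵥ (P *ᵥ w) := by
    rw [star_mulVec, hP]
    rw [Matrix.dotProduct_mulVec (star w ᵥ* P) P w, Matrix.vecMul_vecMul, hPP]
    rw [← Matrix.dotProduct_mulVec]
  rw [← h2, h1, Complex.re_sum]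
  exact (Finset.sum_congr rfl fun i _ => Complex.ofReal_re _).symm

end GhostHelpers

section KetHelpers
variable {d D : ℕ} (V : Matrix (Fin D) (Fin d) ℂ) (hV : Vᴴ * V = 1)
include hV

lemma gpKetInner (j k : Fin d) : star (ket V j) ⬝ᵥ ket V k = if j = k then 1 else 0 := by
  rw [ket, ket, star_mulVec, Matrix.dotProduct_mulVec, Matrix.vecMul_vecMul, hV,
    Matrix.vecMul_one]
  by_cases h : j = k
  · subst h
    simp [dotProduct, Pi.single_apply]
  · have h' : ¬k = j := fun hc => h hc.symm
    simp [dotProduct, Pi.single_apply, h, h']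

lemma gpKetbraMulKetbra (j k : Fin d) :
    ketbra V j * ketbra V k = if j = k then ketbra V j else 0 := by
  rw [ketbra, ketbra, gpMulVecMulVec, gpVecMulVecMulVec, gpKetInner V hV j k]
  by_cases h : j = k
  · subst h
    simp [ketbra]
  · simp only [h, if_false, zero_smul]
    ext a b
    simp [vecMulVec_apply]

lemma gpTraceKetbra (j : Fin d) : (ketbra V j).trace = 1 := by
  rw [ketbra, gpTraceVecMulVec]
  have := gpKetInner V hV j j
  simpa using this

lemma gpTraceKetbraMulKetbra (j k : Fin d) :
    (ketbra V j * ketbra V k).trace = if j = k then 1 else 0 := by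
  rw [gpKetbraMulKetbra V hV j k]
  by_cases h : j = k
  · simp [h, gpTraceKetbra V hV]
  · simp [h]

omit hV in
lemma gpKetbraHerm (j : Fin d) : (ketbra V j)ᴴ = ketbra V j := gpVecMulVecHerm (ket V j)

lemma gpSupportKetbra (j : Fin d) : (V * Vᴴ) * ketbra V j * (V * Vᴴ) = ketbra V j := by
  have hket : (V * Vᴴ) *ᵥ ket V j = ket V j := by
    rw [ket, Matrix.mulVec_mulVec, Matrix.mul_assoc, hV, Matrix.mul_one]
  have h1 : (V * Vᴴ) * ketbra V j = ketbra V j := by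
    rw [ketbra, gpMulVecMulVec, hket]
  have h2 : ketbra V j * (V * Vᴴ) = ketbra V j := by
    have h := congrArg conjTranspose h1
    rw [conjTranspose_mul, gpKetbraHerm] at h
    rw [show (V * Vᴴ)ᴴ = V * Vᴴ by rw [conjTranspose_mul, conjTranspose_conjTranspose]] at h
    exact h
  rw [h1, h2]

end KetHelpers

/-- **Ghost projector lemma, part 2.** Under the same hypotheses: the ghost projector
`P_i` nearly annihilates the corrupted images of the other encoded basis vectors:
`‖P_i E_a |j⟩‖² ≤ d·ε̃` for every `j ≠ i`. -/
theorem ghost_projector_nearly_annihilates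
    (d D r r' : ℕ) (hd : 2 ≤ d)
    (V : Matrix (Fin D) (Fin d) ℂ) (hV : Vᴴ * V = 1)
    (E : Fin r → Matrix (Fin D) (Fin D) ℂ) (hE : ∑ a, (E a)ᴴ * E a = 1)
    (R : Fin r' → Matrix (Fin D) (Fin D) ℂ) (hR : ∑ k, (R k)ᴴ * R k = 1)
    (εt : ℝ)
    (hrec : ∀ ρ : Matrix (Fin D) (Fin D) ℂ, IsDensity ρ →
      (V * Vᴴ) * ρ * (V * Vᴴ) = ρ →
      traceNorm (applyKraus R (applyKraus E ρ) - ρ) ≤ εt)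
    (i : Fin d)
    (hM : (applyKraus E (ketbra V i - rhoPerp V i)).IsHermitian) :
    ∀ j : Fin d, j ≠ i → ∀ a : Fin r,
      (evecNorm (posProj hM *ᵥ (E a *ᵥ ket V j))) ^ 2 ≤ (d : ℝ) * εt := by
  intro j hj a
  classical
  have hd1 : (1:ℕ) ≤ d := by omega
  have hdC : ((d:ℂ) - 1) ≠ 0 := by
    have hne : (d:ℂ) ≠ 1 := by
      intro h
      have : d = 1 := by exact_mod_cast h
      omega
    exact sub_ne_zero.mpr hne
  have hdR : (0:ℝ) < (d:ℝ) - 1 := by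
    have : (2:ℝ) ≤ (d:ℝ) := by exact_mod_cast hd
    linarith
  have hcast : ((d:ℂ) - 1)⁻¹ = ((((d:ℝ) - 1)⁻¹ : ℝ) : ℂ) := by
    push_cast
    ring
  have hcard : (Finset.univ.erase i).card = d - 1 := by
    rw [Finset.card_erase_of_mem (Finset.mem_univ i), Finset.card_univ, Fintype.card_fin]
  -- basic facts on the states
  have hρi_psd : (ketbra V i).PosSemidef := gpVecMulVecPSD _
  have hρih : (ketbra V i).IsHermitian := hρi_psd.1
  have hρi_tr : (ketbra V i).trace = 1 := gpTraceKetbra V hV i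
  have hρi_idem : ketbra V i * ketbra V i = ketbra V i := by
    simpa using gpKetbraMulKetbra V hV i i
  have hPp_psd : (∑ j' ∈ Finset.univ.erase i, ketbra V j').PosSemidef :=
    gpPosSemidefSum fun k _ => gpVecMulVecPSD _
  have hPp_herm : (∑ j' ∈ Finset.univ.erase i, ketbra V j')ᴴ
      = ∑ j' ∈ Finset.univ.erase i, ketbra V j' := hPp_psd.1
  have hPp_idem : (∑ j' ∈ Finset.univ.erase i, ketbra V j') *
      (∑ j' ∈ Finset.univ.erase i, ketbra V j') = ∑ j' ∈ Finset.univ.erase i, ketbra V j' := by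
    rw [Finset.sum_mul_sum]
    refine Finset.sum_congr rfl fun k hk => ?_
    rw [Finset.sum_congr rfl fun l _ => gpKetbraMulKetbra V hV k l]
    rw [Finset.sum_ite_eq]
    simp [hk]
  have hρp_psd : (rhoPerp V i).PosSemidef := by
    rw [rhoPerp, hcast]
    exact gpPSDSmulReal hPp_psd (by positivity)
  have hρph : (rhoPerp V i).IsHermitian := hρp_psd.1
  have hρp_tr : (rhoPerp V i).trace = 1 := by
    rw [rhoPerp, trace_smul, trace_sum]
    have hs : ∑ k ∈ Finset.univ.erase i, (ketbra V k).trace = ((d - 1 : ℕ) : ℂ) := by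
      rw [Finset.sum_congr rfl fun k _ => gpTraceKetbra V hV k, Finset.sum_const, hcard,
        nsmul_eq_mul, mul_one]
    rw [hs, smul_eq_mul, Nat.cast_sub hd1, Nat.cast_one]
    exact inv_mul_cancel₀ hdC
  have hρi_supp : (V * Vᴴ) * ketbra V i * (V * Vᴴ) = ketbra V i := gpSupportKetbra V hV i
  have hρp_supp : (V * Vᴴ) * rhoPerp V i * (V * Vᴴ) = rhoPerp V i := by
    rw [rhoPerp, Matrix.mul_smul, Matrix.smul_mul]
    congr 1
    rw [Finset.mul_sum, Finset.sum_mul]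
    exact Finset.sum_congr rfl fun k _ => gpSupportKetbra V hV k
  have hrec1 := hrec (ketbra V i) ⟨hρi_psd, hρi_tr⟩ hρi_supp
  have hrec2 := hrec (rhoPerp V i) ⟨hρp_psd, hρp_tr⟩ hρp_supp
  have hX1h : (applyKraus R (applyKraus E (ketbra V i)) - ketbra V i).IsHermitian :=
    (gpApplyKrausHerm R (gpApplyKrausHerm E hρih)).sub hρih
  have hX2h : (applyKraus R (applyKraus E (rhoPerp V i)) - rhoPerp V i).IsHermitian :=
    (gpApplyKrausHerm R (gpApplyKrausHerm E hρph)).sub hρph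
  -- the test observable T and its pullback S
  have h1T : (1 - (ketbra V i - ∑ j' ∈ Finset.univ.erase i, ketbra V j')).PosSemidef := by
    have h' : (1 : Matrix (Fin D) (Fin D) ℂ) -
        (ketbra V i - ∑ j' ∈ Finset.univ.erase i, ketbra V j')
        = (1 - ketbra V i) + ∑ j' ∈ Finset.univ.erase i, ketbra V j' := by abel
    rw [h']
    exact (gpOneSubProjPSD hρih.eq hρi_idem).add hPp_psd
  have h2T : (1 + (ketbra V i - ∑ j' ∈ Finset.univ.erase i, ketbra V j')).PosSemidef := by
    have h' : (1 : Matrix (Fin D) (Fin D) ℂ) +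
        (ketbra V i - ∑ j' ∈ Finset.univ.erase i, ketbra V j')
        = (1 - ∑ j' ∈ Finset.univ.erase i, ketbra V j') + ketbra V i := by abel
    rw [h']
    exact (gpOneSubProjPSD hPp_herm hPp_idem).add hρi_psd
  have h1S : (1 - applyKraus (fun k => (R k)ᴴ)
      (ketbra V i - ∑ j' ∈ Finset.univ.erase i, ketbra V j')).PosSemidef := by
    have h' : (1 : Matrix (Fin D) (Fin D) ℂ) - applyKraus (fun k => (R k)ᴴ)
        (ketbra V i - ∑ j' ∈ Finset.univ.erase i, ketbra V j')
        = applyKraus (fun k => (R k)ᴴ)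
          (1 - (ketbra V i - ∑ j' ∈ Finset.univ.erase i, ketbra V j')) := by
      have hs : applyKraus (fun k => (R k)ᴴ)
          (1 - (ketbra V i - ∑ j' ∈ Finset.univ.erase i, ketbra V j'))
          = applyKraus (fun k => (R k)ᴴ) 1 - applyKraus (fun k => (R k)ᴴ)
            (ketbra V i - ∑ j' ∈ Finset.univ.erase i, ketbra V j') := gpApplyKrausSub _ _ _
      rw [hs, gpApplyKrausConjOne R hR]
    rw [h']
    exact gpApplyKrausPSD _ h1T
  have h2S : (1 + applyKraus (fun k => (R k)ᴴ)
      (ketbra V i - ∑ j' ∈ Finset.univ.erase i, ketbra V j')).PosSemidef := by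
    have h' : (1 : Matrix (Fin D) (Fin D) ℂ) + applyKraus (fun k => (R k)ᴴ)
        (ketbra V i - ∑ j' ∈ Finset.univ.erase i, ketbra V j')
        = applyKraus (fun k => (R k)ᴴ)
          (1 + (ketbra V i - ∑ j' ∈ Finset.univ.erase i, ketbra V j')) := by
      have hs : applyKraus (fun k => (R k)ᴴ)
          (1 + (ketbra V i - ∑ j' ∈ Finset.univ.erase i, ketbra V j'))
          = applyKraus (fun k => (R k)ᴴ) 1 + applyKraus (fun k => (R k)ᴴ)
            (ketbra V i - ∑ j' ∈ Finset.univ.erase i, ketbra V j') := gpApplyKrausAdd _ _ _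
      rw [hs, gpApplyKrausConjOne R hR]
    rw [h']
    exact gpApplyKrausPSD _ h2T
  -- the matrix M has trace zero
  have htrΔ : (ketbra V i - rhoPerp V i).trace = 0 := by
    rw [trace_sub, hρi_tr, hρp_tr, sub_self]
  have htrM : (applyKraus E (ketbra V i - rhoPerp V i)).trace = 0 := by
    rw [gpApplyKrausTrace E hE, htrΔ]
  have hsum0 : ∑ k, hM.eigenvalues k = 0 := by
    have h := gpTraceEqSumEigen hM
    rw [htrM] at h
    have hc : ((∑ k, hM.eigenvalues k : ℝ) : ℂ) = 0 := by
      push_cast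
      exact h.symm
    exact_mod_cast hc
  have hPMval : ((posProj hM * applyKraus E (ketbra V i - rhoPerp V i)).trace).re
      = ∑ k, if 0 < hM.eigenvalues k then hM.eigenvalues k else 0 := gpTracePosProjMul hM
  have habs : ∑ k, |hM.eigenvalues k|
      = 2 * ∑ k, (if 0 < hM.eigenvalues k then hM.eigenvalues k else 0) := by
    have hpt : ∀ x : ℝ, |x| = 2 * (if 0 < x then x else 0) - x := by
      intro x
      by_cases h : 0 < x
      · rw [abs_of_pos h]
        simp only [if_pos h]
        ring
      · rw [abs_of_nonpos (not_lt.mp h)]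
        simp only [if_neg h]
        ring
    calc ∑ k, |hM.eigenvalues k|
        = ∑ k, (2 * (if 0 < hM.eigenvalues k then hM.eigenvalues k else 0)
            - hM.eigenvalues k) := Finset.sum_congr rfl fun k _ => hpt _
      _ = 2 * (∑ k, (if 0 < hM.eigenvalues k then hM.eigenvalues k else 0))
            - ∑ k, hM.eigenvalues k := by
          rw [Finset.sum_sub_distrib, Finset.mul_sum]
      _ = _ := by
          rw [hsum0]
          ring
  have hTmulRM : ((applyKraus (fun k => (R k)ᴴ)
        (ketbra V i - ∑ j' ∈ Finset.univ.erase i, ketbra V j'))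
        * applyKraus E (ketbra V i - rhoPerp V i)).trace
      = (((ketbra V i - ∑ j' ∈ Finset.univ.erase i, ketbra V j'))
        * applyKraus R (applyKraus E (ketbra V i - rhoPerp V i))).trace :=
    (gpApplyKrausPair R _ _).symm
  have hSMle : ((((ketbra V i - ∑ j' ∈ Finset.univ.erase i, ketbra V j'))
        * applyKraus R (applyKraus E (ketbra V i - rhoPerp V i))).trace).re
      ≤ 2 * ((posProj hM * applyKraus E (ketbra V i - rhoPerp V i)).trace).re := by
    rw [← hTmulRM]
    calc ((applyKraus (fun k => (R k)ᴴ)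
          (ketbra V i - ∑ j' ∈ Finset.univ.erase i, ketbra V j')
          * applyKraus E (ketbra V i - rhoPerp V i)).trace).re
        ≤ ∑ k, |hM.eigenvalues k| := gpTraceReLe hM h1S h2S
      _ = 2 * ∑ k, (if 0 < hM.eigenvalues k then hM.eigenvalues k else 0) := habs
      _ = 2 * ((posProj hM * applyKraus E (ketbra V i - rhoPerp V i)).trace).re := by
          rw [hPMval]
  -- trace values against T
  have hTρi : (((ketbra V i - ∑ j' ∈ Finset.univ.erase i, ketbra V j'))
      * ketbra V i).trace = 1 := by
    rw [Matrix.sub_mul, trace_sub]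
    have h1 : (ketbra V i * ketbra V i).trace = 1 := by
      have := gpTraceKetbraMulKetbra V hV i i
      simpa using this
    have h2 : ((∑ j' ∈ Finset.univ.erase i, ketbra V j') * ketbra V i).trace = 0 := by
      rw [Finset.sum_mul, trace_sum]
      refine Finset.sum_eq_zero fun k hk => ?_
      rw [gpTraceKetbraMulKetbra V hV k i]
      simp [Finset.ne_of_mem_erase hk]
    rw [h1, h2, sub_zero]
  have hTρp : (((ketbra V i - ∑ j' ∈ Finset.univ.erase i, ketbra V j'))
      * rhoPerp V i).trace = -1 := by
    rw [rhoPerp, Matrix.mul_smul, trace_smul, smul_eq_mul]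
    have hkey : (((ketbra V i - ∑ j' ∈ Finset.univ.erase i, ketbra V j'))
        * ∑ j' ∈ Finset.univ.erase i, ketbra V j').trace = -((d - 1 : ℕ) : ℂ) := by
      rw [Finset.mul_sum, trace_sum]
      have heach : ∀ k ∈ Finset.univ.erase i,
          (((ketbra V i - ∑ j' ∈ Finset.univ.erase i, ketbra V j')) * ketbra V k).trace
            = -1 := by
        intro k hk
        have hik : i ≠ k := fun hc => (Finset.ne_of_mem_erase hk) hc.symm
        rw [Matrix.sub_mul, trace_sub]
        have h1 : (ketbra V i * ketbra V k).trace = 0 := by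
          rw [gpTraceKetbraMulKetbra V hV i k]
          simp [hik]
        have h2 : ((∑ l ∈ Finset.univ.erase i, ketbra V l) * ketbra V k).trace = 1 := by
          rw [Finset.sum_mul, trace_sum]
          rw [Finset.sum_congr rfl fun l _ => gpTraceKetbraMulKetbra V hV l k]
          rw [Finset.sum_ite_eq']
          simp [hk]
        rw [h1, h2]
        ring
      rw [Finset.sum_congr rfl heach, Finset.sum_const, hcard]
      simp
    rw [hkey, Nat.cast_sub hd1, Nat.cast_one, mul_neg, inv_mul_cancel₀ hdC]
  -- bounds from the recovery hypothesis
  have hX1b : -εt ≤ ((((ketbra V i - ∑ j' ∈ Finset.univ.erase i, ketbra V j'))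
      * (applyKraus R (applyKraus E (ketbra V i)) - ketbra V i)).trace).re := by
    have hn1 : (1 - -(ketbra V i - ∑ j' ∈ Finset.univ.erase i, ketbra V j')).PosSemidef := by
      rw [sub_neg_eq_add]
      exact h2T
    have hn2 : (1 + -(ketbra V i - ∑ j' ∈ Finset.univ.erase i, ketbra V j')).PosSemidef := by
      rw [← sub_eq_add_neg]
      exact h1T
    have h := gpTraceReLe hX1h hn1 hn2
    rw [Matrix.neg_mul, trace_neg, Complex.neg_re] at h
    rw [← gpTraceNormHerm hX1h] at h
    linarith [hrec1]
  have hX2b : ((((ketbra V i - ∑ j' ∈ Finset.univ.erase i, ketbra V j'))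
      * (applyKraus R (applyKraus E (rhoPerp V i)) - rhoPerp V i)).trace).re ≤ εt := by
    have h := gpTraceReLe hX2h h1T h2T
    rw [← gpTraceNormHerm hX2h] at h
    linarith [hrec2]
  -- split M and RM
  have hMsplit : applyKraus E (ketbra V i - rhoPerp V i)
      = applyKraus E (ketbra V i) - applyKraus E (rhoPerp V i) := gpApplyKrausSub E _ _
  have hTRM_ge : 2 - 2*εt ≤ ((((ketbra V i - ∑ j' ∈ Finset.univ.erase i, ketbra V j'))
      * applyKraus R (applyKraus E (ketbra V i - rhoPerp V i))).trace).re := by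
    have hexp : ((ketbra V i - ∑ j' ∈ Finset.univ.erase i, ketbra V j'))
        * applyKraus R (applyKraus E (ketbra V i - rhoPerp V i))
        = (((ketbra V i - ∑ j' ∈ Finset.univ.erase i, ketbra V j'))
            * (applyKraus R (applyKraus E (ketbra V i)) - ketbra V i)
          + ((ketbra V i - ∑ j' ∈ Finset.univ.erase i, ketbra V j')) * ketbra V i)
          - (((ketbra V i - ∑ j' ∈ Finset.univ.erase i, ketbra V j'))
            * (applyKraus R (applyKraus E (rhoPerp V i)) - rhoPerp V i)
          + ((ketbra V i - ∑ j' ∈ Finset.univ.erase i, ketbra V j')) * rhoPerp V i) := by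
      rw [hMsplit, gpApplyKrausSub]
      rw [Matrix.mul_sub, Matrix.mul_sub, Matrix.mul_sub]
      abel
    rw [hexp, trace_sub, trace_add, trace_add, hTρi, hTρp]
    simp only [Complex.sub_re, Complex.add_re, Complex.one_re, Complex.neg_re]
    linarith [hX1b, hX2b]
  have hPMge : (1 - εt) ≤ ((posProj hM * applyKraus E (ketbra V i - rhoPerp V i)).trace).re := by
    linarith [hTRM_ge, hSMle]
  -- upper bound Tr(P E(ρ_i)) ≤ 1
  have hD1 : ((posProj hM * applyKraus E (ketbra V i)).trace).re ≤ 1 := by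
    have h := gpTracePosProjPSDLe hM (gpApplyKrausPSD E hρi_psd)
    rw [gpApplyKrausTrace E hE, hρi_tr] at h
    simpa using h
  have hsplitP : (posProj hM * applyKraus E (ketbra V i - rhoPerp V i)).trace
      = (posProj hM * applyKraus E (ketbra V i)).trace
        - (posProj hM * applyKraus E (rhoPerp V i)).trace := by
    rw [← trace_sub, ← Matrix.mul_sub]
    exact congrArg (fun X => (posProj hM * X).trace) hMsplit
  have hF : ((posProj hM * applyKraus E (rhoPerp V i)).trace).re ≤ εt := by
    have h' := hPMge
    rw [hsplitP, Complex.sub_re] at h'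
    linarith [hD1]
  -- decompose Tr(P E(ρ_⊥)) into norms
  have hterm : ∀ w : Fin D → ℂ, (star w ⬝ᵥ (posProj hM *ᵥ w)).re
      = (evecNorm (posProj hM *ᵥ w))^2 := by
    intro w
    rw [← gpProjNormSq (gpPosProjHerm hM) (gpPosProjIdem hM) w]
    rw [evecNorm, Real.sq_sqrt (Finset.sum_nonneg fun k _ => Complex.normSq_nonneg _)]
  have hPEρp_re : ((posProj hM * applyKraus E (rhoPerp V i)).trace).re
      = ((d:ℝ)-1)⁻¹ * ∑ j' ∈ Finset.univ.erase i, ∑ a' : Fin r,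
          (evecNorm (posProj hM *ᵥ (E a' *ᵥ ket V j')))^2 := by
    have hEρp : applyKraus E (rhoPerp V i)
        = ((d:ℂ)-1)⁻¹ • ∑ j' ∈ Finset.univ.erase i, applyKraus E (ketbra V j') := by
      rw [rhoPerp, gpApplyKrausSmul, gpApplyKrausSum]
    rw [hEρp, Matrix.mul_smul, trace_smul, smul_eq_mul, hcast, Complex.re_ofReal_mul]
    congr 1
    rw [Finset.mul_sum, trace_sum, Complex.re_sum]
    refine Finset.sum_congr rfl fun k hk => ?_
    have hak : applyKraus E (ketbra V k) = ∑ a' : Fin r, E a' * ketbra V k * (E a')ᴴ := rfl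
    rw [hak, Finset.mul_sum, trace_sum, Complex.re_sum]
    refine Finset.sum_congr rfl fun a' _ => ?_
    rw [show E a' * ketbra V k * (E a')ᴴ
        = vecMulVec (E a' *ᵥ ket V k) (star (E a' *ᵥ ket V k)) by
      rw [ketbra, gpKrausVecMulVec]]
    rw [gpTraceMulVecMulVec]
    exact hterm _
  have hεt_nonneg : 0 ≤ εt := by
    refine le_trans ?_ hrec1
    rw [gpTraceNormHerm hX1h]
    positivity
  have hsum_le : ∑ j' ∈ Finset.univ.erase i, ∑ a' : Fin r,
      (evecNorm (posProj hM *ᵥ (E a' *ᵥ ket V j')))^2 ≤ ((d:ℝ)-1) * εt := by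
    have h := hF
    rw [hPEρp_re] at h
    have h2 := mul_le_mul_of_nonneg_left h (le_of_lt hdR)
    rw [← mul_assoc, mul_inv_cancel₀ (ne_of_gt hdR), one_mul] at h2
    exact h2
  have hj' : j ∈ Finset.univ.erase i := Finset.mem_erase.mpr ⟨hj, Finset.mem_univ j⟩
  have hsingle : (evecNorm (posProj hM *ᵥ (E a *ᵥ ket V j)))^2
      ≤ ∑ j' ∈ Finset.univ.erase i, ∑ a' : Fin r,
          (evecNorm (posProj hM *ᵥ (E a' *ᵥ ket V j')))^2 := by
    calc (evecNorm (posProj hM *ᵥ (E a *ᵥ ket V j)))^2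
        ≤ ∑ a' : Fin r, (evecNorm (posProj hM *ᵥ (E a' *ᵥ ket V j)))^2 :=
          Finset.single_le_sum
            (f := fun a' => (evecNorm (posProj hM *ᵥ (E a' *ᵥ ket V j)))^2)
            (fun _ _ => sq_nonneg _) (Finset.mem_univ a)
      _ ≤ _ := Finset.single_le_sum
          (f := fun j' => ∑ a' : Fin r, (evecNorm (posProj hM *ᵥ (E a' *ᵥ ket V j')))^2)
          (fun k _ => Finset.sum_nonneg fun _ _ => sq_nonneg _) hj'
  calc (evecNorm (posProj hM *ᵥ (E a *ᵥ ket V j)))^2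
      ≤ ((d:ℝ)-1) * εt := le_trans hsingle hsum_le
    _ ≤ (d:ℝ) * εt := by nlinarith [hεt_nonneg]
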